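/- If α is a locally Lipschitz class K function and h:[0,t_f)→ℝ is a continuously differentiable function satisfying ḣ(t) ≥ -α(h(t)) for all t ∈ [0,t_f) with h(0) ≥ 0, then h(t) ≥ 0 for all t ∈ [0,t_f). -/
import Mathlib

open Topology Filter


/-- Comparison lemma: if `α` is a locally Lipschitz class-K function and
`h : [0, t_f) → ℝ` is continuously differentiable with `ḣ(t) ≥ -α(h(t))`
on `[0, t_f)` and `h 0 ≥ 0`, then `h t ≥ 0` on `[0, t_f)`.
Here `t_f : EReal` may be `⊤` (infinite horizon). -/
theorem stmt0
    (tf : EReal) (htf : 0 < tf)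
    (α : ℝ → ℝ)
    (hα_cont : Continuous α)
    (hα_mono : StrictMonoOn α (Set.Ici 0))
    (hα_zero : α 0 = 0)
    (hα_lip : LocallyLipschitz α)
    (h h' : ℝ → ℝ)
    (hderiv : ∀ t : ℝ, 0 ≤ t → (t : EReal) < tf → HasDerivAt h (h' t) t)
    (h'cont : ContinuousOn h' {t : ℝ | 0 ≤ t ∧ (t : EReal) < tf})
    (hineq : ∀ t : ℝ, 0 ≤ t → (t : EReal) < tf → h' t ≥ -α (h t))
    (h0 : h 0 ≥ 0) :
    ∀ t : ℝ, 0 ≤ t → (t : EReal) < tf → h t ≥ 0 := by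
  intro t₀ ht₀0 ht₀tf
  by_contra hneg
  push_neg at hneg
  -- any point of [0, t₀] is below tf
  have hlt_tf : ∀ t : ℝ, t ≤ t₀ → (t : EReal) < tf := fun t ht =>
    lt_of_le_of_lt (by exact_mod_cast EReal.coe_le_coe_iff.2 ht) ht₀tf
  -- h is continuous on [0, t₀]
  have hcont : ContinuousOn h (Set.Icc 0 t₀) := fun t ht =>
    ((hderiv t ht.1 (hlt_tf t ht.2)).continuousAt).continuousWithinAt
  -- the set of nonnegative points
  set S : Set ℝ := {t ∈ Set.Icc 0 t₀ | 0 ≤ h t} with hS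
  have hSne : S.Nonempty := ⟨0, ⟨le_refl 0, ht₀0⟩, h0⟩
  have hSbdd : BddAbove S := ⟨t₀, fun t ht => ht.1.2⟩
  have hSclosed : IsClosed S := by
    have : S = Set.Icc 0 t₀ ∩ h ⁻¹' Set.Ici 0 := by
      ext t; simp [hS, Set.mem_setOf_eq, and_comm]
    rw [this]
    exact hcont.preimage_isClosed_of_isClosed isClosed_Icc isClosed_Ici
  set s := sSup S with hs
  have hScomp : IsCompact S := isCompact_Icc.of_isClosed_subset hSclosed fun t ht => ht.1
  have hsS : s ∈ S := hScomp.sSup_mem hSne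
  have hs0 : 0 ≤ s := hsS.1.1
  have hst₀ : s ≤ t₀ := hsS.1.2
  have hst₀' : s < t₀ := by
    rcases lt_or_eq_of_le hst₀ with h' | h'
    · exact h'
    · exact absurd (h' ▸ hsS.2) (not_le.2 hneg)
  -- h is negative on (s, t₀]
  have hnegIoc : ∀ t ∈ Set.Ioc s t₀, h t < 0 := by
    intro t ht
    by_contra hh
    push_neg at hh
    have : t ∈ S := ⟨⟨le_trans hs0 ht.1.le, ht.2⟩, hh⟩
    exact absurd (le_csSup hSbdd this) (not_le.2 ht.1)
  -- h s = 0
  have hhs : h s = 0 := by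
    refine le_antisymm ?_ hsS.2
    have hne : (𝓝[Set.Ioc s t₀] s).NeBot := by
      rw [← mem_closure_iff_nhdsWithin_neBot, closure_Ioc hst₀'.ne]
      exact ⟨le_refl s, hst₀⟩
    have htend : Filter.Tendsto h (𝓝[Set.Ioc s t₀] s) (𝓝 (h s)) :=
      (hcont s ⟨hs0, hst₀⟩).mono (fun t ht => ⟨le_trans hs0 ht.1.le, ht.2⟩)
    exact le_of_tendsto htend (Filter.eventually_of_mem self_mem_nhdsWithin
      fun t ht => (hnegIoc t ht).le)
  -- local Lipschitz constant at 0
  obtain ⟨K, U, hU, hlip⟩ := hα_lip 0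
  obtain ⟨δ, hδ0, hball⟩ := Metric.mem_nhds_iff.1 hU
  -- find t₁ ∈ (s, t₀] with |h| < δ on [s, t₁]
  have hcsw : ContinuousWithinAt h (Set.Icc 0 t₀) s := hcont s ⟨hs0, hst₀⟩
  rw [Metric.continuousWithinAt_iff] at hcsw
  obtain ⟨η, hη0, hη⟩ := hcsw δ hδ0
  set t₁ := min (s + η / 2) t₀ with ht₁
  have hst₁ : s < t₁ := lt_min (by linarith) hst₀'
  have ht₁t₀ : t₁ ≤ t₀ := min_le_right _ _
  have hsmall : ∀ x ∈ Set.Icc s t₁, |h x| < δ := by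
    intro x hx
    have hx0 : 0 ≤ x := le_trans hs0 hx.1
    have hxt₀ : x ≤ t₀ := le_trans hx.2 ht₁t₀
    have : dist x s < η := by
      rw [Real.dist_eq, abs_of_nonneg (by linarith [hx.1])]
      have : x ≤ s + η / 2 := le_trans hx.2 (min_le_left _ _)
      linarith
    have := hη ⟨hx0, hxt₀⟩ this
    rwa [hhs, Real.dist_eq, sub_zero] at this
  -- apply Grönwall to -h on [s, t₁]
  have hmemU : ∀ x ∈ Set.Icc s t₁, h x ∈ U := fun x hx =>
    hball (by simpa [Metric.mem_ball, Real.dist_eq] using hsmall x hx)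
  have h0U : (0 : ℝ) ∈ U := hball (Metric.mem_ball_self hδ0)
  have key : ∀ x ∈ Set.Icc s t₁, -h x ≤ gronwallBound 0 K 0 (x - s) := by
    apply le_gronwallBound_of_liminf_deriv_right_le
      (f' := fun t => -h' t)
    · exact (hcont.mono (fun x hx => ⟨le_trans hs0 hx.1, le_trans hx.2 ht₁t₀⟩)).neg
    · intro x hx r hr
      have hx0 : 0 ≤ x := le_trans hs0 hx.1
      have hxtf : (x : EReal) < tf := hlt_tf x (le_trans hx.2.le ht₁t₀)
      have := ((hderiv x hx0 hxtf).neg).hasDerivWithinAt (s := Set.Ici x)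
      exact this.liminf_right_slope_le hr
    · simp [hhs]
    · intro x hx
      have hx' : x ∈ Set.Icc s t₁ := ⟨hx.1, hx.2.le⟩
      have hx0 : 0 ≤ x := le_trans hs0 hx.1
      have hxtf : (x : EReal) < tf := hlt_tf x (le_trans hx.2.le ht₁t₀)
      have h1 : -h' x ≤ α (h x) := by
        have := hineq x hx0 hxtf; linarith
      have h2 : α (h x) ≤ (K : ℝ) * (-h x) := by
        have hd := hlip.dist_le_mul (h x) (hmemU x hx') 0 h0U
        rw [Real.dist_eq, Real.dist_eq, hα_zero, sub_zero, sub_zero] at hd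
        have hhx : h x ≤ 0 := by
          rcases eq_or_lt_of_le hx.1 with h' | h'
          · rw [← h', hhs]
          · exact (hnegIoc x ⟨h', le_trans hx.2.le ht₁t₀⟩).le
        calc α (h x) ≤ |α (h x)| := le_abs_self _
          _ ≤ (K : ℝ) * |h x| := hd
          _ = (K : ℝ) * (-h x) := by rw [abs_of_nonpos hhx]
      linarith
  have := key t₁ ⟨hst₁.le, le_refl t₁⟩
  rw [gronwallBound_ε0_δ0] at this
  have hneg₁ : h t₁ < 0 := hnegIoc t₁ ⟨hst₁, ht₁t₀⟩
  linarith
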